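/- arXiv:2102.04611 — 2 statements merged into one kernel-verified Lean document; each statement's English description precedes it below -/
import Mathlib

section
/- Let k ≥ 1 and let 0 < λ_1 ≤ λ_2 ≤ ⋯ ≤ λ_k < λ_{k+1} be real numbers satisfying Yang's first inequality ∑_{i=1}^k (λ_{k+1} − λ_i)² ≤ (4/n) ∑_{i=1}^k (λ_{k+1} − λ_i) λ_i. Then Yang's second inequality holds: λ_{k+1} ≤ (1/k)(1 + 4/n) ∑_{i=1}^k λ_i. -/
open Finset

/-- Yang's first inequality implies Yang's second inequality. -/
theorem yang_first_implies_yang_second (n k : ℕ) (hn : 1 ≤ n) (hk : 1 ≤ k)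
    (Λ : ℕ → ℝ) (hpos : 0 < Λ 1)
    (hmono : ∀ i, 1 ≤ i → i < k → Λ i ≤ Λ (i + 1))
    (hlt : Λ k < Λ (k + 1))
    (hYang1 : ∑ i ∈ Icc 1 k, (Λ (k + 1) - Λ i) ^ 2 ≤
      (4 / (n : ℝ)) * ∑ i ∈ Icc 1 k, (Λ (k + 1) - Λ i) * Λ i) :
    Λ (k + 1) ≤ (1 / (k : ℝ)) * (1 + 4 / (n : ℝ)) * ∑ i ∈ Icc 1 k, Λ i := by
  set a := Λ (k + 1) with ha
  set S1 := ∑ i ∈ Icc 1 k, Λ i with hS1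
  set S2 := ∑ i ∈ Icc 1 k, Λ i ^ 2 with hS2
  have hK : (0:ℝ) < k := by exact_mod_cast hk
  have hN : (0:ℝ) < n := by exact_mod_cast hn
  -- chain monotonicity
  have chain : ∀ m, ∀ j, 1 ≤ j → j ≤ m → m ≤ k → Λ j ≤ Λ m := by
    intro m
    induction m with
    | zero => intro j h1 h2 _; omega
    | succ m ih =>
      intro j h1 h2 h3
      rcases Nat.lt_or_ge j (m+1) with h | h
      · have hjm : j ≤ m := by omega
        have h1m : 1 ≤ m := by omega
        calc Λ j ≤ Λ m := ih j h1 hjm (by omega)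
          _ ≤ Λ (m+1) := hmono m h1m (by omega)
      · have : j = m + 1 := by omega
        simp [this]
  have hlta : ∀ j ∈ Icc 1 k, Λ j < a := by
    intro j hj
    simp only [mem_Icc] at hj
    exact lt_of_le_of_lt (chain k j hj.1 hj.2 le_rfl) hlt
  have hne : (Icc 1 k).Nonempty := ⟨1, by simp [hk]⟩
  -- S1 < k * a
  have hS1lt : S1 < (k:ℝ) * a := by
    have := Finset.sum_lt_sum_of_nonempty hne hlta
    simpa [Nat.card_Icc, mul_comm] using this
  -- Cauchy-Schwarz
  have hCS : S1 ^ 2 ≤ (k:ℝ) * S2 := by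
    have := sq_sum_le_card_mul_sum_sq (s := Icc 1 k) (f := Λ)
    simpa [Nat.card_Icc] using this
  -- expand Yang 1
  have e1 : ∑ i ∈ Icc 1 k, (a - Λ i) ^ 2 = (k:ℝ) * a ^ 2 - 2 * a * S1 + S2 := by
    have : ∀ i ∈ Icc 1 k, (a - Λ i) ^ 2 = a ^ 2 - 2 * a * Λ i + Λ i ^ 2 := by
      intro i _; ring
    rw [Finset.sum_congr rfl this, Finset.sum_add_distrib, Finset.sum_sub_distrib,
      Finset.sum_const, ← Finset.mul_sum, Nat.card_Icc]
    simp [hS1, hS2]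
  have e2 : ∑ i ∈ Icc 1 k, (a - Λ i) * Λ i = a * S1 - S2 := by
    have : ∀ i ∈ Icc 1 k, (a - Λ i) * Λ i = a * Λ i - Λ i ^ 2 := by
      intro i _; ring
    rw [Finset.sum_congr rfl this, Finset.sum_sub_distrib, ← Finset.mul_sum]
  rw [e1, e2] at hYang1
  -- multiply through by n
  have hY : (n:ℝ) * ((k:ℝ) * a ^ 2 - 2 * a * S1 + S2) ≤ 4 * (a * S1 - S2) := by
    have h4 : (4 / (n:ℝ)) * (a * S1 - S2) * (n:ℝ) = 4 * (a * S1 - S2) := by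
      field_simp
    nlinarith [mul_le_mul_of_nonneg_right hYang1 (le_of_lt hN)]
  -- key: n*k*a ≤ (n+4)*S1
  have hkey : (n:ℝ) * (k:ℝ) * a ≤ ((n:ℝ) + 4) * S1 := by
    nlinarith [mul_le_mul_of_nonneg_left hY hK.le, mul_pos hN hK,
      sub_nonneg.mpr hCS, sq_nonneg ((k:ℝ) * a - S1)]
  rw [show (1 / (k:ℝ)) * (1 + 4 / (n:ℝ)) * S1 = (((n:ℝ) + 4) * S1) / ((k:ℝ) * (n:ℝ)) by
    field_simp, le_div_iff₀ (by positivity)]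
  nlinarith [hkey]
end

section
/- Let k ≥ 1, n ≥ 1 an integer, and let 0 < Λ_1 ≤ ⋯ ≤ Λ_k < Λ_{k+1} be real numbers satisfying the Cheng–Yang clamped-plate inequality Λ_{k+1} − (1/k)∑_{i=1}^k Λ_i ≤ (8(n+2)/n²)^{1/2} (1/k) ∑_{i=1}^k (Λ_i (Λ_{k+1} − Λ_i))^{1/2}. Then Λ_{k+1} ≤ (1 + 8(n+2)/n²) (1/k) ∑_{i=1}^k Λ_i. -/
open Finset

/-- The Cheng–Yang clamped-plate inequality implies the simpler bound
`Λ_{k+1} ≤ (1 + 8(n+2)/n²) (1/k) ∑ Λ_i`. -/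
theorem cheng_yang_implies_bound (n k : ℕ) (hn : 1 ≤ n) (hk : 1 ≤ k)
    (Λ : ℕ → ℝ) (hpos : 0 < Λ 1)
    (hmono : ∀ i, 1 ≤ i → i < k → Λ i ≤ Λ (i + 1))
    (hlt : Λ k < Λ (k + 1))
    (hCY : Λ (k + 1) - (1 / (k : ℝ)) * ∑ i ∈ Icc 1 k, Λ i ≤
      Real.sqrt (8 * ((n : ℝ) + 2) / (n : ℝ) ^ 2) * (1 / (k : ℝ)) *
        ∑ i ∈ Icc 1 k, Real.sqrt (Λ i * (Λ (k + 1) - Λ i))) :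
    Λ (k + 1) ≤ (1 + 8 * ((n : ℝ) + 2) / (n : ℝ) ^ 2) * (1 / (k : ℝ)) *
      ∑ i ∈ Icc 1 k, Λ i := by
  have step : ∀ d j, 1 ≤ j → j + d ≤ k → Λ j ≤ Λ (j + d) := by
    intro d
    induction d with
    | zero => intro j _ _; simp
    | succ m ih =>
      intro j hj hjk
      have h1 := ih j hj (by omega)
      have h2 := hmono (j + m) (by omega) (by omega)
      have : j + (m + 1) = j + m + 1 := by ring
      rw [this]
      linarith
  have hub : ∀ j, 1 ≤ j → j ≤ k → Λ j ≤ Λ k := by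
    intro j hj hjk
    have := step (k - j) j hj (by omega)
    rwa [Nat.add_sub_cancel' hjk] at this
  have hlb : ∀ j, 1 ≤ j → j ≤ k → 0 < Λ j := by
    intro j hj hjk
    have := step (j - 1) 1 le_rfl (by omega)
    rw [Nat.add_sub_cancel' hj] at this
    linarith
  set L := Λ (k + 1)
  set C := 8 * ((n : ℝ) + 2) / (n : ℝ) ^ 2 with hC
  have hCnn : (0:ℝ) ≤ C := by positivity
  have hcsq : Real.sqrt C ^ 2 = C := Real.sq_sqrt hCnn
  have hknn : (0:ℝ) < (k : ℝ) := by exact_mod_cast hk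
  set T := ∑ i ∈ Icc 1 k, Λ i with hT
  set S := ∑ i ∈ Icc 1 k, Real.sqrt (Λ i * (L - Λ i)) with hS
  have hSnn : 0 ≤ S := sum_nonneg fun i _ => Real.sqrt_nonneg _
  -- Cauchy–Schwarz
  have hCS : S ^ 2 ≤ T * ∑ i ∈ Icc 1 k, (L - Λ i) := by
    refine sum_sq_le_sum_mul_sum_of_sq_eq_mul _ (fun i hi => ?_) (fun i hi => ?_)
      (fun i hi => ?_)
    · exact (hlb i (mem_Icc.1 hi).1 (mem_Icc.1 hi).2).le
    · have := hub i (mem_Icc.1 hi).1 (mem_Icc.1 hi).2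
      linarith
    · refine Real.sq_sqrt ?_
      have h1 := hlb i (mem_Icc.1 hi).1 (mem_Icc.1 hi).2
      have h2 := hub i (mem_Icc.1 hi).1 (mem_Icc.1 hi).2
      nlinarith
  have hsum : ∑ i ∈ Icc 1 k, (L - Λ i) = (k : ℝ) * L - T := by
    rw [sum_sub_distrib, sum_const, Nat.card_Icc]
    simp [hT]
  rw [hsum] at hCS
  -- T bounds
  have hTpos : 0 < T := sum_pos (fun i hi => hlb i (mem_Icc.1 hi).1 (mem_Icc.1 hi).2)
    (by simp [Nat.lt_of_lt_of_le Nat.zero_lt_one hk]; omega)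
  have hTle : T ≤ (k : ℝ) * Λ k := by
    calc T ≤ ∑ i ∈ Icc 1 k, Λ k :=
          sum_le_sum fun i hi => hub i (mem_Icc.1 hi).1 (mem_Icc.1 hi).2
      _ = (k : ℝ) * Λ k := by rw [sum_const, Nat.card_Icc]; simp
  have hTL : T < (k : ℝ) * L := lt_of_le_of_lt hTle (by
    exact (mul_lt_mul_iff_right₀ hknn).2 hlt)
  -- CY rearranged: k*L - T ≤ √C * S
  have hCY' : (k : ℝ) * L - T ≤ Real.sqrt C * S := by
    have h2 : (k:ℝ) * (L - 1 / (k:ℝ) * T) ≤ (k:ℝ) * (Real.sqrt C * (1 / (k:ℝ)) * S) :=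
      mul_le_mul_of_nonneg_left hCY hknn.le
    calc (k : ℝ) * L - T = (k:ℝ) * (L - 1 / (k:ℝ) * T) := by field_simp
      _ ≤ (k:ℝ) * (Real.sqrt C * (1 / (k:ℝ)) * S) := h2
      _ = Real.sqrt C * S := by field_simp
  -- combine: (kL - T)^2 ≤ C * S^2 ≤ C * T * (kL - T)
  have hkey : ((k:ℝ) * L - T) ^ 2 ≤ C * (T * ((k:ℝ)*L - T)) := by
    have h1 : ((k:ℝ) * L - T) ^ 2 ≤ (Real.sqrt C * S) ^ 2 := by
      apply sq_le_sq' <;> nlinarith [Real.sqrt_nonneg C]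
    calc ((k:ℝ) * L - T) ^ 2 ≤ (Real.sqrt C * S) ^ 2 := h1
      _ = C * S ^ 2 := by rw [mul_pow, hcsq]
      _ ≤ C * (T * ((k:ℝ)*L - T)) := by
          apply mul_le_mul_of_nonneg_left hCS hCnn
  have hfin : (k:ℝ) * L - T ≤ C * T := by
    have hpos' : 0 < (k:ℝ) * L - T := by linarith
    nlinarith
  calc L = ((k:ℝ) * L) / (k:ℝ) := by field_simp
    _ ≤ ((1 + C) * T) / (k:ℝ) := (div_le_div_iff_of_pos_right hknn).2 (by nlinarith)
    _ = (1 + C) * (1 / (k:ℝ)) * T := by ring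
end
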